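/- Let n ≥ 2, let ε ∈ (0,1), and let 1 ≤ k ≤ n−1. Consider any adaptive information of cardinality k using matrix-vector multiplications: a vector z_1 ∈ ℝ^n and maps ψ_i : (ℝ^n)^i → ℝ^n for i = 1, …, k−1, which for an n×n real symmetric matrix A determine y_1(A) = A z_1 and y_{i+1}(A) = A ψ_i(y_1(A), …, y_i(A)). Then for every algorithm φ : (ℝ^n)^k → ℝ there exists a nonzero n×n real symmetric matrix A such that |λ_max(A) − φ(y_1(A), …, y_k(A))| > ε ‖A‖, where λ_max(A) is the largest eigenvalue of A. That is, the largest eigenvalue of a symmetric matrix cannot be approximated to within ε‖A‖ for all symmetric A using fewer than n matrix-vector multiplications. -/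

import Mathlib

/-- The Euclidean norm on `ℝ^n`. -/
noncomputable def euclNorm {n : ℕ} (v : Fin n → ℝ) : ℝ := Real.sqrt (∑ i, v i ^ 2)

/-- The spectral norm of an `n × n` real matrix: the operator norm induced by the
Euclidean norm. -/
noncomputable def specNorm {n : ℕ} (A : Matrix (Fin n) (Fin n) ℝ) : ℝ :=
  ‖LinearMap.toContinuousLinearMap (Matrix.toEuclideanLin A)‖

/-- The largest eigenvalue of a real matrix (for a symmetric matrix this is the
maximum of the real spectrum). -/
noncomputable def lamMax {n : ℕ} (A : Matrix (Fin n) (Fin n) ℝ) : ℝ :=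
  sSup {μ : ℝ | ∃ v : Fin n → ℝ, v ≠ 0 ∧ A.mulVec v = μ • v}

theorem stmt_5 (n : ℕ) (hn : 2 ≤ n) (ε : ℝ) (hε : ε ∈ Set.Ioo (0 : ℝ) 1)
    (k : ℕ) (hk1 : 1 ≤ k) (hk2 : k ≤ n - 1)
    (z₁ : Fin n → ℝ)
    (ψ : (i : ℕ) → (Fin (i + 1) → (Fin n → ℝ)) → (Fin n → ℝ))
    (y : Matrix (Fin n) (Fin n) ℝ → ℕ → (Fin n → ℝ))
    (hy0 : ∀ A, y A 0 = A.mulVec z₁)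
    (hysucc : ∀ A i, y A (i + 1) = A.mulVec (ψ i (fun j : Fin (i + 1) => y A j.1)))
    (φ : (Fin k → (Fin n → ℝ)) → ℝ) :
    ∃ A : Matrix (Fin n) (Fin n) ℝ, A ≠ 0 ∧ A.IsSymm ∧
      ε * specNorm A < |lamMax A - φ (fun i => y A i.1)| := by
  classical
  obtain ⟨hε0, hε1⟩ := hε
  have hkn : k < n := by omega
  -- The query vectors when all answers are zero.
  set q : ℕ → (Fin n → ℝ) := fun i => Nat.rec z₁ (fun j _ => ψ j (fun _ => 0)) i with hqdef
  have hq0 : q 0 = z₁ := rfl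
  have hqs : ∀ j, q (j + 1) = ψ j (fun _ => 0) := fun _ => rfl
  -- Find a unit vector orthogonal to q 0, ..., q (k-1).
  let f : Fin k → EuclideanSpace ℝ (Fin n) := fun i => WithLp.toLp 2 (q i)
  have hWtop : Submodule.span ℝ (Set.range f) ≠ ⊤ := by
    have hcard : (Set.range f).toFinset.card < Module.finrank ℝ (EuclideanSpace ℝ (Fin n)) := by
      rw [Set.toFinset_card, finrank_euclideanSpace_fin]
      exact lt_of_le_of_lt (le_trans (Fintype.card_range_le f) (by simp)) hkn
    exact (span_lt_top_of_card_lt_finrank hcard).ne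
  have hWbot : (Submodule.span ℝ (Set.range f))ᗮ ≠ ⊥ := by
    exact fun h => hWtop (Submodule.orthogonal_eq_bot_iff.mp h)
  obtain ⟨u₀, hu₀W, hu₀⟩ := (Submodule.ne_bot_iff _).mp hWbot
  set u : EuclideanSpace ℝ (Fin n) := ‖u₀‖⁻¹ • u₀ with hudef
  have huW : u ∈ (Submodule.span ℝ (Set.range f))ᗮ :=
    Submodule.smul_mem _ _ hu₀W
  have hu_norm : ‖u‖ = 1 := norm_smul_inv_norm hu₀
  have hu_ne : u ≠ 0 := by intro h; rw [h, norm_zero] at hu_norm; norm_num at hu_norm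
  set uf : Fin n → ℝ := (WithLp.equiv 2 (Fin n → ℝ)) u with hufdef
  have huf_sum : (∑ j, uf j ^ 2) = 1 := by
    have := EuclideanSpace.norm_eq u
    rw [hu_norm] at this
    have h1 : Real.sqrt (∑ i, ‖u i‖ ^ 2) = 1 := this.symm
    rw [Real.sqrt_eq_one] at h1
    simp [Real.norm_eq_abs, sq_abs] at h1
    exact h1
  have horth : ∀ i : Fin k, (∑ j, uf j * q i j) = 0 := by
    intro i
    have hmem : f i ∈ Submodule.span ℝ (Set.range f) :=
      Submodule.subset_span (Set.mem_range_self i)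
    have := (Submodule.mem_orthogonal _ u).mp huW (f i) hmem
    have h2 : (∑ j, (f i) j * u j) = 0 := by
      simpa [PiLp.inner_apply, RCLike.inner_apply, conj_trivial, mul_comm] using this
    rw [← h2]
    exact Finset.sum_congr rfl (fun j _ => mul_comm _ _)
  -- The adversarial matrix.
  set r : ℝ := φ (fun _ => 0) with hrdef
  set c : ℝ := (|r| + 1) / (1 - ε) with hcdef
  have hc : 0 < c := div_pos (by positivity) (by linarith)
  set A : Matrix (Fin n) (Fin n) ℝ := Matrix.of (fun i j => c * (uf i * uf j)) with hAdef
  have hmulvec : ∀ x : Fin n → ℝ, A.mulVec x = (c * ∑ j, uf j * x j) • uf := by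
    intro x; funext i
    simp only [hAdef, Matrix.mulVec, dotProduct, Matrix.of_apply, Pi.smul_apply,
      smul_eq_mul]
    rw [Finset.mul_sum, Finset.sum_mul]
    exact Finset.sum_congr rfl (fun j _ => by ring)
  -- All information vectors vanish on A.
  have hyzero : ∀ i, i < k → y A i = 0 := by
    intro i
    induction i using Nat.strong_induction_on with
    | _ i ih =>
      intro hik
      match i with
      | 0 =>
        rw [hy0, hmulvec, ← hq0, horth ⟨0, hk1⟩]
        simp
      | (j + 1) =>
        have harg : (fun m : Fin (j + 1) => y A m.1) = fun _ => 0 := by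
          funext m
          exact ih m.1 m.isLt (m.isLt.trans hik)
        rw [hysucc, harg, ← hqs j, hmulvec, horth ⟨j + 1, hik⟩]
        simp
  have hφ : φ (fun i : Fin k => y A i.1) = r := by
    rw [hrdef]
    congr 1
    funext i
    exact hyzero i.1 i.isLt
  -- A is nonzero and symmetric.
  have huf_ne : ∃ i, uf i ≠ 0 := by
    by_contra h
    push_neg at h
    apply hu_ne
    ext i
    exact h i
  obtain ⟨i₀, hi₀⟩ := huf_ne
  have hAne : A ≠ 0 := by
    intro h
    have : A i₀ i₀ = 0 := by rw [h]; rfl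
    rw [hAdef] at this
    simp only [Matrix.of_apply] at this
    rcases mul_eq_zero.mp this with h1 | h1
    · exact absurd h1 hc.ne'
    · rcases mul_eq_zero.mp h1 with h2 | h2 <;> exact hi₀ h2
  have hAsymm : A.IsSymm := by
    unfold Matrix.IsSymm
    ext i j
    simp only [hAdef, Matrix.transpose_apply, Matrix.of_apply]
    ring
  -- lamMax A = c.
  have hcS : c ∈ {μ : ℝ | ∃ v : Fin n → ℝ, v ≠ 0 ∧ A.mulVec v = μ • v} := by
    refine ⟨uf, fun h => hi₀ (by rw [h]; rfl), ?_⟩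
    rw [hmulvec]
    congr 1
    have : (∑ j, uf j * uf j) = 1 := by
      rw [← huf_sum]; exact Finset.sum_congr rfl (fun j _ => (sq (uf j)).symm)
    rw [this, mul_one]
  have hub : ∀ μ ∈ {μ : ℝ | ∃ v : Fin n → ℝ, v ≠ 0 ∧ A.mulVec v = μ • v}, μ ≤ c := by
    rintro μ ⟨v, hv, hAv⟩
    rw [hmulvec] at hAv
    set d : ℝ := ∑ j, uf j * v j with hddef
    clear_value d
    have hdot : (∑ j, ((c * d) • uf) j * v j) = (∑ j, (μ • v) j * v j) := by rw [hAv]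
    have hL : (∑ j, ((c * d) • uf) j * v j) = c * d ^ 2 := by
      have h3 : (∑ j, ((c * d) • uf) j * v j) = (c * d) * ∑ j, uf j * v j := by
        rw [Finset.mul_sum]
        exact Finset.sum_congr rfl (fun j _ => by simp only [Pi.smul_apply, smul_eq_mul]; ring)
      rw [h3, ← hddef]; ring
    have hR : (∑ j, (μ • v) j * v j) = μ * ∑ j, v j ^ 2 := by
      simp only [Pi.smul_apply, smul_eq_mul]
      rw [Finset.mul_sum]
      exact Finset.sum_congr rfl (fun j _ => by ring)
    have hkey : μ * ∑ j, v j ^ 2 = c * d ^ 2 := by rw [← hR, ← hdot, hL]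
    have hvpos : 0 < ∑ j, v j ^ 2 := by
      obtain ⟨i, hi⟩ : ∃ i, v i ≠ 0 := by
        by_contra h; push_neg at h; exact hv (funext h)
      exact Finset.sum_pos' (fun j _ => sq_nonneg _) ⟨i, Finset.mem_univ i, sq_pos_of_ne_zero hi⟩
    have hcs : d ^ 2 ≤ ∑ j, v j ^ 2 := by
      have := Finset.sum_mul_sq_le_sq_mul_sq Finset.univ uf v
      rwa [huf_sum, one_mul, ← hddef] at this
    have : μ * ∑ j, v j ^ 2 ≤ c * ∑ j, v j ^ 2 := by
      rw [hkey]
      exact mul_le_mul_of_nonneg_left hcs hc.le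
    exact le_of_mul_le_mul_right this hvpos
  have hlam : lamMax A = c := by
    unfold lamMax
    exact le_antisymm (csSup_le ⟨c, hcS⟩ hub) (le_csSup ⟨c, hub⟩ hcS)
  -- specNorm A ≤ c.
  have hspec : specNorm A ≤ c := by
    unfold specNorm
    apply ContinuousLinearMap.opNorm_le_bound _ hc.le
    intro x
    set xf : Fin n → ℝ := (WithLp.equiv 2 (Fin n → ℝ)) x with hxfdef
    have happ : (LinearMap.toContinuousLinearMap (Matrix.toEuclideanLin A)) x
        = (WithLp.equiv 2 (Fin n → ℝ)).symm (A.mulVec xf) := rfl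
    rw [happ, hmulvec]
    have heq : (WithLp.equiv 2 (Fin n → ℝ)).symm ((c * ∑ j, uf j * xf j) • uf)
        = (c * ∑ j, uf j * xf j) • u := rfl
    rw [heq, norm_smul, hu_norm, mul_one]
    have hinner : (∑ j, uf j * xf j) = (inner ℝ u x : ℝ) := by
      rw [PiLp.inner_apply]
      simp only [RCLike.inner_apply, conj_trivial]
      exact Finset.sum_congr rfl (fun j _ => mul_comm _ _)
    rw [Real.norm_eq_abs, abs_mul, abs_of_pos hc, hinner]
    have := abs_real_inner_le_norm u x
    rw [hu_norm, one_mul] at this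
    exact mul_le_mul_of_nonneg_left this hc.le
  -- Conclusion.
  refine ⟨A, hAne, hAsymm, ?_⟩
  rw [hφ, hlam]
  have hcr : ε * c < c - r := by
    have h1 : c * (1 - ε) = |r| + 1 := by
      rw [hcdef, div_mul_cancel₀ _ (by linarith : (1:ℝ) - ε ≠ 0)]
    have h2 : r ≤ |r| := le_abs_self r
    nlinarith
  have : ε * specNorm A ≤ ε * c := mul_le_mul_of_nonneg_left hspec hε0.le
  calc ε * specNorm A ≤ ε * c := this
    _ < c - r := hcr
    _ ≤ |c - r| := le_abs_self _
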